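/- Let H_4(y) = ((y+2)/2)·ln y − ((y+4)/2)·ln(y + 4(1 + √((4+y)/(2(y−2))))) + ln(2y + 4(y+4)(1 + √((4+y)/(2(y−2))))). Then H_4 is strictly increasing on [12, ∞), and H_4(3) < H_4(4) < H_4(5) < H_4(6) < H_4(7) < H_4(8) < H_4(9) < H_4(10) < H_4(11) < H_4(12); consequently, for every integer d2 ≥ 5, H_4(d2 − 2) < H_4(d2). -/

import Mathlib

/-- `H₄(y) = ((y+2)/2)·ln y − ((y+4)/2)·ln(y + 4(1 + √((4+y)/(2(y−2)))))
  + ln(2y + 4(y+4)(1 + √((4+y)/(2(y−2)))))`. -/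
noncomputable def H4 (y : ℝ) : ℝ :=
  (y + 2) / 2 * Real.log y -
    (y + 4) / 2 * Real.log (y + 4 * (1 + Real.sqrt ((4 + y) / (2 * (y - 2))))) +
    Real.log (2 * y + 4 * (y + 4) * (1 + Real.sqrt ((4 + y) / (2 * (y - 2)))))

private lemma log_le_half_sub_inv {t : ℝ} (ht : 1 ≤ t) : Real.log t ≤ (t - t⁻¹) / 2 := by
  have h0 : (0:ℝ) < t := lt_of_lt_of_le one_pos ht
  have h := Real.self_le_sinh_iff.mpr (Real.log_nonneg ht)
  rwa [Real.sinh_log h0] at h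

private lemma H4_hasDerivAt {y : ℝ} (hy : 2 < y) :
    HasDerivAt H4
      (1/2 * Real.log y + (y+2)/2 * y⁻¹
        - (1/2 * Real.log (y + 4 * (1 + Real.sqrt ((4 + y) / (2 * (y - 2)))))
          + (y+4)/2 * ((1 + 4 * (-3/(y-2)^2 / (2 * Real.sqrt ((4 + y) / (2 * (y - 2))))))
              / (y + 4 * (1 + Real.sqrt ((4 + y) / (2 * (y - 2)))))))
        + (2 + (4 * (1 + Real.sqrt ((4 + y) / (2 * (y - 2))))
            + 4*(y+4) * (-3/(y-2)^2 / (2 * Real.sqrt ((4 + y) / (2 * (y - 2)))))))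
          / (2 * y + 4 * (y + 4) * (1 + Real.sqrt ((4 + y) / (2 * (y - 2)))))) y := by
  have hy2 : (0:ℝ) < y - 2 := by linarith
  have hy0 : (0:ℝ) < y := by linarith
  have hq : (0:ℝ) < (4 + y) / (2 * (y - 2)) := div_pos (by linarith) (by linarith)
  have hsnn : (0:ℝ) ≤ Real.sqrt ((4 + y) / (2 * (y - 2))) := Real.sqrt_nonneg _
  have hrat : HasDerivAt (fun x : ℝ => (4 + x) / (2 * (x - 2))) (-3/(y-2)^2) y := by
    have h1 : HasDerivAt (fun x : ℝ => 4 + x) 1 y := by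
      simpa using (hasDerivAt_id y).const_add (4:ℝ)
    have h2 : HasDerivAt (fun x : ℝ => 2 * (x - 2)) 2 y := by
      simpa using ((hasDerivAt_id y).sub_const (2:ℝ)).const_mul (2:ℝ)
    have h3 : HasDerivAt (fun x : ℝ => (4 + x) / (2 * (x - 2))) _ y := h1.div h2 (ne_of_gt (by linarith : (0:ℝ) < 2 * (y - 2)))
    convert h3 using 1
    rw [div_eq_div_iff (pow_ne_zero 2 hy2.ne') (pow_ne_zero 2 (mul_pos two_pos hy2).ne')]
    ring
  have hsder : HasDerivAt (fun x : ℝ => Real.sqrt ((4 + x) / (2 * (x - 2))))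
      (-3/(y-2)^2 / (2 * Real.sqrt ((4 + y) / (2 * (y - 2))))) y :=
    hrat.sqrt (ne_of_gt hq)
  have hAder : HasDerivAt (fun x : ℝ => x + 4 * (1 + Real.sqrt ((4 + x) / (2 * (x - 2)))))
      (1 + 4 * (-3/(y-2)^2 / (2 * Real.sqrt ((4 + y) / (2 * (y - 2)))))) y :=
    (hasDerivAt_id y).add ((hsder.const_add 1).const_mul 4)
  have hBder : HasDerivAt
      (fun x : ℝ => 2 * x + 4 * (x + 4) * (1 + Real.sqrt ((4 + x) / (2 * (x - 2)))))
      (2 + (4 * (1 + Real.sqrt ((4 + y) / (2 * (y - 2))))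
        + 4*(y+4) * (-3/(y-2)^2 / (2 * Real.sqrt ((4 + y) / (2 * (y - 2))))))) y := by
    have h1 : HasDerivAt (fun x : ℝ => 2 * x) 2 y := by
      simpa using (hasDerivAt_id y).const_mul (2:ℝ)
    have h2 : HasDerivAt (fun x : ℝ => 4 * (x + 4)) 4 y := by
      simpa using ((hasDerivAt_id y).add_const (4:ℝ)).const_mul (4:ℝ)
    exact h1.add (h2.mul (hsder.const_add 1))
  have hA0 : (0:ℝ) < y + 4 * (1 + Real.sqrt ((4 + y) / (2 * (y - 2)))) := by nlinarith
  have hB0 : (0:ℝ) < 2 * y + 4 * (y + 4) * (1 + Real.sqrt ((4 + y) / (2 * (y - 2)))) := by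
    nlinarith [mul_nonneg (show (0:ℝ) ≤ y + 4 by linarith) hsnn]
  have hlin1 : HasDerivAt (fun x : ℝ => (x + 2) / 2) (1/2) y := by
    simpa using ((hasDerivAt_id y).add_const (2:ℝ)).div_const (2:ℝ)
  have hlin2 : HasDerivAt (fun x : ℝ => (x + 4) / 2) (1/2) y := by
    simpa using ((hasDerivAt_id y).add_const (4:ℝ)).div_const (2:ℝ)
  have t1 : HasDerivAt (fun x : ℝ => (x + 2) / 2 * Real.log x)
      (1/2 * Real.log y + (y+2)/2 * y⁻¹) y :=
    hlin1.mul (Real.hasDerivAt_log (ne_of_gt hy0))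
  have t2 : HasDerivAt
      (fun x : ℝ => (x + 4) / 2 * Real.log (x + 4 * (1 + Real.sqrt ((4 + x) / (2 * (x - 2))))))
      (1/2 * Real.log (y + 4 * (1 + Real.sqrt ((4 + y) / (2 * (y - 2)))))
        + (y+4)/2 * ((1 + 4 * (-3/(y-2)^2 / (2 * Real.sqrt ((4 + y) / (2 * (y - 2))))))
            / (y + 4 * (1 + Real.sqrt ((4 + y) / (2 * (y - 2))))))) y :=
    hlin2.mul (hAder.log (ne_of_gt hA0))
  have t3 : HasDerivAt
      (fun x : ℝ => Real.log (2 * x + 4 * (x + 4) * (1 + Real.sqrt ((4 + x) / (2 * (x - 2))))))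
      ((2 + (4 * (1 + Real.sqrt ((4 + y) / (2 * (y - 2))))
        + 4*(y+4) * (-3/(y-2)^2 / (2 * Real.sqrt ((4 + y) / (2 * (y - 2)))))))
        / (2 * y + 4 * (y + 4) * (1 + Real.sqrt ((4 + y) / (2 * (y - 2)))))) y :=
    hBder.log (ne_of_gt hB0)
  exact (t1.sub t2).add t3

set_option maxHeartbeats 1600000 in
private lemma H4_deriv_pos {y : ℝ} (hy : 12 < y) : ∃ d, HasDerivAt H4 d y ∧ 0 < d := by
  refine ⟨_, H4_hasDerivAt (by linarith), ?_⟩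
  have hy2 : (0:ℝ) < y - 2 := by linarith
  have hy0 : (0:ℝ) < y := by linarith
  have hq : (0:ℝ) < (4 + y) / (2 * (y - 2)) := div_pos (by linarith) (by linarith)
  set s : ℝ := Real.sqrt ((4 + y) / (2 * (y - 2))) with hsdef
  have hs0 : 0 < s := Real.sqrt_pos.mpr hq
  have hs2 : s^2 * (2*(y-2)) = 4 + y := by
    rw [hsdef, Real.sq_sqrt hq.le]
    field_simp
  have hA0 : (0:ℝ) < y + 4 * (1 + s) := by nlinarith
  have hB0 : (0:ℝ) < 2 * y + 4 * (y + 4) * (1 + s) := by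
    nlinarith [mul_nonneg (show (0:ℝ) ≤ y + 4 by linarith) hs0.le]
  -- logarithm bound
  have h1 : (1:ℝ) ≤ (y + 4 * (1 + s)) / y := by
    rw [le_div_iff₀ hy0]; nlinarith
  have h2 := log_le_half_sub_inv h1
  rw [Real.log_div (ne_of_gt hA0) (ne_of_gt hy0)] at h2
  have h3 : ((y + 4 * (1 + s)) / y - ((y + 4 * (1 + s)) / y)⁻¹) / 2
      = ((y + 4 * (1 + s))^2 - y^2) / (2 * (y + 4 * (1 + s)) * y) := by
    rw [inv_div]
    field_simp
  rw [h3] at h2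
  -- positivity of the rational part
  have ht : (0:ℝ) < y - 12 := by linarith
  have hP : (0:ℝ) < -10240*y + 9728*y^2 - 1536*y^3 - 640*y^4 + 128*y^5 := by
    nlinarith [pow_pos ht 5, pow_pos ht 4, pow_pos ht 3, pow_pos ht 2, ht]
  have hQ : (0:ℝ) < 32768 - 26624*y - 1024*y^2 + 5120*y^3 - 1280*y^4 + 128*y^5 := by
    nlinarith [pow_pos ht 5, pow_pos ht 4, pow_pos ht 3, pow_pos ht 2, ht]
  have hkey : (-1024*s^2 - 2048*s^3 - 1024*s^4 + 384*y + 512*y*s + 1024*y*s^2 + 1664*y*s^3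
      + 768*y*s^4 + 288*y^2 + 160*y^2*s - 256*y^2*s^2 - 128*y^2*s^3 + 48*y^3 + 80*y^3*s
      - 96*y^3*s^3 - 64*y^3*s^4) * (2*y-4)^2
      = (-10240*y + 9728*y^2 - 1536*y^3 - 640*y^4 + 128*y^5)
        + s * (32768 - 26624*y - 1024*y^2 + 5120*y^3 - 1280*y^4 + 128*y^5) := by
    linear_combination (8192*s + 4096*s^2 - 4096*y - 10752*y*s - 5120*y*s^2 + 3840*y^2
      + 3840*y^2*s + 1536*y^2*s^2 - 768*y^3 + 128*y^3*s + 256*y^3*s^2 - 64*y^4 - 192*y^4*s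
      - 128*y^4*s^2) * hs2
  have hN : (0:ℝ) < -1024*s^2 - 2048*s^3 - 1024*s^4 + 384*y + 512*y*s + 1024*y*s^2
      + 1664*y*s^3 + 768*y*s^4 + 288*y^2 + 160*y^2*s - 256*y^2*s^2 - 128*y^2*s^3 + 48*y^3
      + 80*y^3*s - 96*y^3*s^3 - 64*y^3*s^4 := by
    have h4y : (0:ℝ) < (2*y-4)^2 := pow_pos (by linarith) 2
    have hPQ : (0:ℝ) < (-10240*y + 9728*y^2 - 1536*y^3 - 640*y^4 + 128*y^5)
        + s * (32768 - 26624*y - 1024*y^2 + 5120*y^3 - 1280*y^4 + 128*y^5) :=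
      add_pos hP (mul_pos hs0 hQ)
    rw [(eq_div_iff (ne_of_gt h4y)).mpr hkey]
    exact div_pos hPQ h4y
  have hM : (0:ℝ) < 4*y*((y + 4*(1+s))*((2*y + 4*(y+4)*(1+s))*(s*(y-2)^2))) :=
    mul_pos (by linarith) (mul_pos hA0 (mul_pos hB0 (mul_pos hs0 (pow_pos hy2 2))))
  have hE : (-(((y + 4 * (1 + s))^2 - y^2) / (2 * (y + 4 * (1 + s)) * y))/2
      + ((y+2)/2 * y⁻¹
        - (y+4)/2 * ((1 + 4 * (-3/(y-2)^2 / (2 * s))) / (y + 4 * (1 + s)))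
        + (2 + (4 * (1 + s) + 4*(y+4) * (-3/(y-2)^2 / (2 * s))))
            / (2 * y + 4 * (y + 4) * (1 + s))))
      * (4*y*((y + 4*(1+s))*((2*y + 4*(y+4)*(1+s))*(s*(y-2)^2))))
      = -1024*s^2 - 2048*s^3 - 1024*s^4 + 384*y + 512*y*s + 1024*y*s^2 + 1664*y*s^3
        + 768*y*s^4 + 288*y^2 + 160*y^2*s - 256*y^2*s^2 - 128*y^2*s^3 + 48*y^3 + 80*y^3*s
        - 96*y^3*s^3 - 64*y^3*s^4 := by
    field_simp
    ring
  have hE0 : (0:ℝ) < -(((y + 4 * (1 + s))^2 - y^2) / (2 * (y + 4 * (1 + s)) * y))/2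
      + ((y+2)/2 * y⁻¹
        - (y+4)/2 * ((1 + 4 * (-3/(y-2)^2 / (2 * s))) / (y + 4 * (1 + s)))
        + (2 + (4 * (1 + s) + 4*(y+4) * (-3/(y-2)^2 / (2 * s))))
            / (2 * y + 4 * (y + 4) * (1 + s))) := by
    rw [(eq_div_iff (ne_of_gt hM)).mpr hE]
    exact div_pos hN hM
  linarith [h2, hE0]

set_option maxHeartbeats 1600000 in
private lemma H4_mono_step (y z sl su tl tu : ℝ) (hy : 2 < y) (hz : 2 < z)
    (hsl0 : 0 ≤ sl) (htl0 : 0 ≤ tl) (hsu0 : 0 < su) (htu0 : 0 < tu)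
    (hsl : sl^2 < (4+y)/(2*(y-2))) (hsu : (4+y)/(2*(y-2)) < su^2)
    (htl : tl^2 < (4+z)/(2*(z-2))) (htu : (4+z)/(2*(z-2)) < tu^2)
    (hmain : (y+2)/2*Real.log y - (y+4)/2*Real.log (y+4*(1+sl))
        + Real.log (2*y+4*(y+4)*(1+su))
        < (z+2)/2*Real.log z - (z+4)/2*Real.log (z+4*(1+tu))
        + Real.log (2*z+4*(z+4)*(1+tl))) :
    H4 y < H4 z := by
  have hy0 : (0:ℝ) < y := by linarith
  have hz0 : (0:ℝ) < z := by linarith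
  have h1 : sl < Real.sqrt ((4+y)/(2*(y-2))) := Real.lt_sqrt_of_sq_lt hsl
  have h2 : Real.sqrt ((4+y)/(2*(y-2))) < su := (Real.sqrt_lt' hsu0).mpr hsu
  have h3 : tl < Real.sqrt ((4+z)/(2*(z-2))) := Real.lt_sqrt_of_sq_lt htl
  have h4 : Real.sqrt ((4+z)/(2*(z-2))) < tu := (Real.sqrt_lt' htu0).mpr htu
  have hA1 : Real.log (y+4*(1+sl)) ≤ Real.log (y + 4*(1 + Real.sqrt ((4+y)/(2*(y-2))))) :=
    Real.log_le_log (by linarith) (by linarith)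
  have hB1 : Real.log (2*y + 4*(y+4)*(1 + Real.sqrt ((4+y)/(2*(y-2)))))
      ≤ Real.log (2*y+4*(y+4)*(1+su)) := by
    apply Real.log_le_log
    · linarith [mul_nonneg (show (0:ℝ) ≤ 4*(y + 4) by linarith)
        (show (0:ℝ) ≤ 1 + Real.sqrt ((4+y)/(2*(y-2))) by
          linarith [Real.sqrt_nonneg ((4+y)/(2*(y-2)))])]
    · linarith [mul_le_mul_of_nonneg_left h2.le (show (0:ℝ) ≤ 4*(y+4) by linarith)]
  have hA2 : Real.log (z + 4*(1 + Real.sqrt ((4+z)/(2*(z-2))))) ≤ Real.log (z+4*(1+tu)) := by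
    apply Real.log_le_log
    · linarith [mul_nonneg (show (0:ℝ) ≤ 4*(z + 4) by linarith)
        (show (0:ℝ) ≤ 1 + Real.sqrt ((4+z)/(2*(z-2))) by
          linarith [Real.sqrt_nonneg ((4+z)/(2*(z-2)))])]
    · linarith
  have hB2 : Real.log (2*z+4*(z+4)*(1+tl))
      ≤ Real.log (2*z + 4*(z+4)*(1 + Real.sqrt ((4+z)/(2*(z-2))))) := by
    apply Real.log_le_log
    · linarith [mul_nonneg (show (0:ℝ) ≤ 4*(z + 4) by linarith) htl0]
    · linarith [mul_le_mul_of_nonneg_left h3.le (show (0:ℝ) ≤ 4*(z+4) by linarith)]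
  have m1 := mul_le_mul_of_nonneg_left hA1 (show (0:ℝ) ≤ (y+4)/2 by linarith)
  have m2 := mul_le_mul_of_nonneg_left hA2 (show (0:ℝ) ≤ (z+4)/2 by linarith)
  unfold H4
  linarith [hmain, m1, m2, hB1, hB2]

theorem H4_increasing :
    StrictMonoOn H4 (Set.Ici (12 : ℝ)) ∧
      H4 3 < H4 4 ∧ H4 4 < H4 5 ∧ H4 5 < H4 6 ∧ H4 6 < H4 7 ∧ H4 7 < H4 8 ∧
      H4 8 < H4 9 ∧ H4 9 < H4 10 ∧ H4 10 < H4 11 ∧ H4 11 < H4 12 ∧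
      ∀ d2 : ℕ, 5 ≤ d2 → H4 ((d2 : ℝ) - 2) < H4 (d2 : ℝ) := by
  have mono : StrictMonoOn H4 (Set.Ici (12 : ℝ)) := by
    apply strictMonoOn_of_deriv_pos (convex_Ici 12)
    · intro x hx
      have hx2 : (2:ℝ) < x := lt_of_lt_of_le (by norm_num) hx
      exact (H4_hasDerivAt hx2).continuousAt.continuousWithinAt
    · intro x hx
      rw [interior_Ici] at hx
      obtain ⟨d, hd, hp⟩ := H4_deriv_pos hx
      rwa [hd.deriv]
  have c34 : H4 3 < H4 4 := by
    apply H4_mono_step 3 4 (9354143/5000000) (18708287/10000000) (2828427/2000000) (1767767/1250000)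
      (by norm_num) (by norm_num) (by norm_num) (by norm_num) (by norm_num)
      (by norm_num) (by norm_num) (by norm_num) (by norm_num) (by norm_num)
    have key : Real.log ((3:ℝ)^5 * (4+4*(1+1767767/1250000))^8 * (2*3+4*(3+4)*(1+18708287/10000000))^2)
        < Real.log ((4:ℝ)^6 * (3+4*(1+9354143/5000000))^7 * (2*4+4*(4+4)*(1+2828427/2000000))^2) :=
      Real.log_lt_log (by positivity) (by norm_num)
    have e1 : Real.log ((3:ℝ)^5 * (4+4*(1+1767767/1250000))^8 * (2*3+4*(3+4)*(1+18708287/10000000))^2)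
        = 5*Real.log 3 + 8*Real.log (4+4*(1+1767767/1250000)) + 2*Real.log (2*3+4*(3+4)*(1+18708287/10000000)) := by
      rw [Real.log_mul (by positivity) (by positivity),
        Real.log_mul (by positivity) (by positivity),
        Real.log_pow, Real.log_pow, Real.log_pow]
      push_cast; ring
    have e2 : Real.log ((4:ℝ)^6 * (3+4*(1+9354143/5000000))^7 * (2*4+4*(4+4)*(1+2828427/2000000))^2)
        = 6*Real.log 4 + 7*Real.log (3+4*(1+9354143/5000000)) + 2*Real.log (2*4+4*(4+4)*(1+2828427/2000000)) := by
      rw [Real.log_mul (by positivity) (by positivity),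
        Real.log_mul (by positivity) (by positivity),
        Real.log_pow, Real.log_pow, Real.log_pow]
      push_cast; ring
    rw [e1, e2] at key
    linarith [key]

  have c45 : H4 4 < H4 5 := by
    apply H4_mono_step 4 5 (2828427/2000000) (1767767/1250000) (1530931/1250000) (12247449/10000000)
      (by norm_num) (by norm_num) (by norm_num) (by norm_num) (by norm_num)
      (by norm_num) (by norm_num) (by norm_num) (by norm_num) (by norm_num)
    have key : Real.log ((4:ℝ)^6 * (5+4*(1+12247449/10000000))^9 * (2*4+4*(4+4)*(1+1767767/1250000))^2)
        < Real.log ((5:ℝ)^7 * (4+4*(1+2828427/2000000))^8 * (2*5+4*(5+4)*(1+1530931/1250000))^2) :=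
      Real.log_lt_log (by positivity) (by norm_num)
    have e1 : Real.log ((4:ℝ)^6 * (5+4*(1+12247449/10000000))^9 * (2*4+4*(4+4)*(1+1767767/1250000))^2)
        = 6*Real.log 4 + 9*Real.log (5+4*(1+12247449/10000000)) + 2*Real.log (2*4+4*(4+4)*(1+1767767/1250000)) := by
      rw [Real.log_mul (by positivity) (by positivity),
        Real.log_mul (by positivity) (by positivity),
        Real.log_pow, Real.log_pow, Real.log_pow]
      push_cast; ring
    have e2 : Real.log ((5:ℝ)^7 * (4+4*(1+2828427/2000000))^8 * (2*5+4*(5+4)*(1+1530931/1250000))^2)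
        = 7*Real.log 5 + 8*Real.log (4+4*(1+2828427/2000000)) + 2*Real.log (2*5+4*(5+4)*(1+1530931/1250000)) := by
      rw [Real.log_mul (by positivity) (by positivity),
        Real.log_mul (by positivity) (by positivity),
        Real.log_pow, Real.log_pow, Real.log_pow]
      push_cast; ring
    rw [e1, e2] at key
    linarith [key]

  have c56 : H4 5 < H4 6 := by
    apply H4_mono_step 5 6 (1530931/1250000) (12247449/10000000) (11180339/10000000) (559017/500000)
      (by norm_num) (by norm_num) (by norm_num) (by norm_num) (by norm_num)
      (by norm_num) (by norm_num) (by norm_num) (by norm_num) (by norm_num)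
    have key : Real.log ((5:ℝ)^7 * (6+4*(1+559017/500000))^10 * (2*5+4*(5+4)*(1+12247449/10000000))^2)
        < Real.log ((6:ℝ)^8 * (5+4*(1+1530931/1250000))^9 * (2*6+4*(6+4)*(1+11180339/10000000))^2) :=
      Real.log_lt_log (by positivity) (by norm_num)
    have e1 : Real.log ((5:ℝ)^7 * (6+4*(1+559017/500000))^10 * (2*5+4*(5+4)*(1+12247449/10000000))^2)
        = 7*Real.log 5 + 10*Real.log (6+4*(1+559017/500000)) + 2*Real.log (2*5+4*(5+4)*(1+12247449/10000000)) := by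
      rw [Real.log_mul (by positivity) (by positivity),
        Real.log_mul (by positivity) (by positivity),
        Real.log_pow, Real.log_pow, Real.log_pow]
      push_cast; ring
    have e2 : Real.log ((6:ℝ)^8 * (5+4*(1+1530931/1250000))^9 * (2*6+4*(6+4)*(1+11180339/10000000))^2)
        = 8*Real.log 6 + 9*Real.log (5+4*(1+1530931/1250000)) + 2*Real.log (2*6+4*(6+4)*(1+11180339/10000000)) := by
      rw [Real.log_mul (by positivity) (by positivity),
        Real.log_mul (by positivity) (by positivity),
        Real.log_pow, Real.log_pow, Real.log_pow]
      push_cast; ring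
    rw [e1, e2] at key
    linarith [key]

  have c67 : H4 6 < H4 7 := by
    apply H4_mono_step 6 7 (11180339/10000000) (559017/500000) (1311011/1250000) (10488089/10000000)
      (by norm_num) (by norm_num) (by norm_num) (by norm_num) (by norm_num)
      (by norm_num) (by norm_num) (by norm_num) (by norm_num) (by norm_num)
    have key : Real.log ((6:ℝ)^8 * (7+4*(1+10488089/10000000))^11 * (2*6+4*(6+4)*(1+559017/500000))^2)
        < Real.log ((7:ℝ)^9 * (6+4*(1+11180339/10000000))^10 * (2*7+4*(7+4)*(1+1311011/1250000))^2) :=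
      Real.log_lt_log (by positivity) (by norm_num)
    have e1 : Real.log ((6:ℝ)^8 * (7+4*(1+10488089/10000000))^11 * (2*6+4*(6+4)*(1+559017/500000))^2)
        = 8*Real.log 6 + 11*Real.log (7+4*(1+10488089/10000000)) + 2*Real.log (2*6+4*(6+4)*(1+559017/500000)) := by
      rw [Real.log_mul (by positivity) (by positivity),
        Real.log_mul (by positivity) (by positivity),
        Real.log_pow, Real.log_pow, Real.log_pow]
      push_cast; ring
    have e2 : Real.log ((7:ℝ)^9 * (6+4*(1+11180339/10000000))^10 * (2*7+4*(7+4)*(1+1311011/1250000))^2)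
        = 9*Real.log 7 + 10*Real.log (6+4*(1+11180339/10000000)) + 2*Real.log (2*7+4*(7+4)*(1+1311011/1250000)) := by
      rw [Real.log_mul (by positivity) (by positivity),
        Real.log_mul (by positivity) (by positivity),
        Real.log_pow, Real.log_pow, Real.log_pow]
      push_cast; ring
    rw [e1, e2] at key
    linarith [key]

  have c78 : H4 7 < H4 8 := by
    apply H4_mono_step 7 8 (1311011/1250000) (10488089/10000000) (9999999/10000000) (10000001/10000000)
      (by norm_num) (by norm_num) (by norm_num) (by norm_num) (by norm_num)
      (by norm_num) (by norm_num) (by norm_num) (by norm_num) (by norm_num)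
    have key : Real.log ((7:ℝ)^9 * (8+4*(1+10000001/10000000))^12 * (2*7+4*(7+4)*(1+10488089/10000000))^2)
        < Real.log ((8:ℝ)^10 * (7+4*(1+1311011/1250000))^11 * (2*8+4*(8+4)*(1+9999999/10000000))^2) :=
      Real.log_lt_log (by positivity) (by norm_num)
    have e1 : Real.log ((7:ℝ)^9 * (8+4*(1+10000001/10000000))^12 * (2*7+4*(7+4)*(1+10488089/10000000))^2)
        = 9*Real.log 7 + 12*Real.log (8+4*(1+10000001/10000000)) + 2*Real.log (2*7+4*(7+4)*(1+10488089/10000000)) := by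
      rw [Real.log_mul (by positivity) (by positivity),
        Real.log_mul (by positivity) (by positivity),
        Real.log_pow, Real.log_pow, Real.log_pow]
      push_cast; ring
    have e2 : Real.log ((8:ℝ)^10 * (7+4*(1+1311011/1250000))^11 * (2*8+4*(8+4)*(1+9999999/10000000))^2)
        = 10*Real.log 8 + 11*Real.log (7+4*(1+1311011/1250000)) + 2*Real.log (2*8+4*(8+4)*(1+9999999/10000000)) := by
      rw [Real.log_mul (by positivity) (by positivity),
        Real.log_mul (by positivity) (by positivity),
        Real.log_pow, Real.log_pow, Real.log_pow]
      push_cast; ring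
    rw [e1, e2] at key
    linarith [key]

  have c89 : H4 8 < H4 9 := by
    apply H4_mono_step 8 9 (9999999/10000000) (10000001/10000000) (9636241/10000000) (4818121/5000000)
      (by norm_num) (by norm_num) (by norm_num) (by norm_num) (by norm_num)
      (by norm_num) (by norm_num) (by norm_num) (by norm_num) (by norm_num)
    have key : Real.log ((8:ℝ)^10 * (9+4*(1+4818121/5000000))^13 * (2*8+4*(8+4)*(1+10000001/10000000))^2)
        < Real.log ((9:ℝ)^11 * (8+4*(1+9999999/10000000))^12 * (2*9+4*(9+4)*(1+9636241/10000000))^2) :=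
      Real.log_lt_log (by positivity) (by norm_num)
    have e1 : Real.log ((8:ℝ)^10 * (9+4*(1+4818121/5000000))^13 * (2*8+4*(8+4)*(1+10000001/10000000))^2)
        = 10*Real.log 8 + 13*Real.log (9+4*(1+4818121/5000000)) + 2*Real.log (2*8+4*(8+4)*(1+10000001/10000000)) := by
      rw [Real.log_mul (by positivity) (by positivity),
        Real.log_mul (by positivity) (by positivity),
        Real.log_pow, Real.log_pow, Real.log_pow]
      push_cast; ring
    have e2 : Real.log ((9:ℝ)^11 * (8+4*(1+9999999/10000000))^12 * (2*9+4*(9+4)*(1+9636241/10000000))^2)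
        = 11*Real.log 9 + 12*Real.log (8+4*(1+9999999/10000000)) + 2*Real.log (2*9+4*(9+4)*(1+9636241/10000000)) := by
      rw [Real.log_mul (by positivity) (by positivity),
        Real.log_mul (by positivity) (by positivity),
        Real.log_pow, Real.log_pow, Real.log_pow]
      push_cast; ring
    rw [e1, e2] at key
    linarith [key]

  have c910 : H4 9 < H4 10 := by
    apply H4_mono_step 9 10 (9636241/10000000) (4818121/5000000) (9354143/10000000) (292317/312500)
      (by norm_num) (by norm_num) (by norm_num) (by norm_num) (by norm_num)
      (by norm_num) (by norm_num) (by norm_num) (by norm_num) (by norm_num)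
    have key : Real.log ((9:ℝ)^11 * (10+4*(1+292317/312500))^14 * (2*9+4*(9+4)*(1+4818121/5000000))^2)
        < Real.log ((10:ℝ)^12 * (9+4*(1+9636241/10000000))^13 * (2*10+4*(10+4)*(1+9354143/10000000))^2) :=
      Real.log_lt_log (by positivity) (by norm_num)
    have e1 : Real.log ((9:ℝ)^11 * (10+4*(1+292317/312500))^14 * (2*9+4*(9+4)*(1+4818121/5000000))^2)
        = 11*Real.log 9 + 14*Real.log (10+4*(1+292317/312500)) + 2*Real.log (2*9+4*(9+4)*(1+4818121/5000000)) := by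
      rw [Real.log_mul (by positivity) (by positivity),
        Real.log_mul (by positivity) (by positivity),
        Real.log_pow, Real.log_pow, Real.log_pow]
      push_cast; ring
    have e2 : Real.log ((10:ℝ)^12 * (9+4*(1+9636241/10000000))^13 * (2*10+4*(10+4)*(1+9354143/10000000))^2)
        = 12*Real.log 10 + 13*Real.log (9+4*(1+9636241/10000000)) + 2*Real.log (2*10+4*(10+4)*(1+9354143/10000000)) := by
      rw [Real.log_mul (by positivity) (by positivity),
        Real.log_mul (by positivity) (by positivity),
        Real.log_pow, Real.log_pow, Real.log_pow]
      push_cast; ring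
    rw [e1, e2] at key
    linarith [key]

  have c1011 : H4 10 < H4 11 := by
    apply H4_mono_step 10 11 (9354143/10000000) (292317/312500) (9128709/10000000) (912871/1000000)
      (by norm_num) (by norm_num) (by norm_num) (by norm_num) (by norm_num)
      (by norm_num) (by norm_num) (by norm_num) (by norm_num) (by norm_num)
    have key : Real.log ((10:ℝ)^12 * (11+4*(1+912871/1000000))^15 * (2*10+4*(10+4)*(1+292317/312500))^2)
        < Real.log ((11:ℝ)^13 * (10+4*(1+9354143/10000000))^14 * (2*11+4*(11+4)*(1+9128709/10000000))^2) :=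
      Real.log_lt_log (by positivity) (by norm_num)
    have e1 : Real.log ((10:ℝ)^12 * (11+4*(1+912871/1000000))^15 * (2*10+4*(10+4)*(1+292317/312500))^2)
        = 12*Real.log 10 + 15*Real.log (11+4*(1+912871/1000000)) + 2*Real.log (2*10+4*(10+4)*(1+292317/312500)) := by
      rw [Real.log_mul (by positivity) (by positivity),
        Real.log_mul (by positivity) (by positivity),
        Real.log_pow, Real.log_pow, Real.log_pow]
      push_cast; ring
    have e2 : Real.log ((11:ℝ)^13 * (10+4*(1+9354143/10000000))^14 * (2*11+4*(11+4)*(1+9128709/10000000))^2)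
        = 13*Real.log 11 + 14*Real.log (10+4*(1+9354143/10000000)) + 2*Real.log (2*11+4*(11+4)*(1+9128709/10000000)) := by
      rw [Real.log_mul (by positivity) (by positivity),
        Real.log_mul (by positivity) (by positivity),
        Real.log_pow, Real.log_pow, Real.log_pow]
      push_cast; ring
    rw [e1, e2] at key
    linarith [key]

  have c1112 : H4 11 < H4 12 := by
    apply H4_mono_step 11 12 (9128709/10000000) (912871/1000000) (8944271/10000000) (559017/625000)
      (by norm_num) (by norm_num) (by norm_num) (by norm_num) (by norm_num)
      (by norm_num) (by norm_num) (by norm_num) (by norm_num) (by norm_num)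
    have key : Real.log ((11:ℝ)^13 * (12+4*(1+559017/625000))^16 * (2*11+4*(11+4)*(1+912871/1000000))^2)
        < Real.log ((12:ℝ)^14 * (11+4*(1+9128709/10000000))^15 * (2*12+4*(12+4)*(1+8944271/10000000))^2) :=
      Real.log_lt_log (by positivity) (by norm_num)
    have e1 : Real.log ((11:ℝ)^13 * (12+4*(1+559017/625000))^16 * (2*11+4*(11+4)*(1+912871/1000000))^2)
        = 13*Real.log 11 + 16*Real.log (12+4*(1+559017/625000)) + 2*Real.log (2*11+4*(11+4)*(1+912871/1000000)) := by
      rw [Real.log_mul (by positivity) (by positivity),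
        Real.log_mul (by positivity) (by positivity),
        Real.log_pow, Real.log_pow, Real.log_pow]
      push_cast; ring
    have e2 : Real.log ((12:ℝ)^14 * (11+4*(1+9128709/10000000))^15 * (2*12+4*(12+4)*(1+8944271/10000000))^2)
        = 14*Real.log 12 + 15*Real.log (11+4*(1+9128709/10000000)) + 2*Real.log (2*12+4*(12+4)*(1+8944271/10000000)) := by
      rw [Real.log_mul (by positivity) (by positivity),
        Real.log_mul (by positivity) (by positivity),
        Real.log_pow, Real.log_pow, Real.log_pow]
      push_cast; ring
    rw [e1, e2] at key
    linarith [key]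
  have c1213 : H4 12 < H4 13 :=
    mono (Set.self_mem_Ici) (by simp; norm_num) (by norm_num)
  refine ⟨mono, c34, c45, c56, c67, c78, c89, c910, c1011, c1112, ?_⟩
  intro d2 hd2
  by_cases hle : d2 ≤ 13
  · interval_cases d2
    · norm_num; exact lt_trans c34 c45
    · norm_num; exact lt_trans c45 c56
    · norm_num; exact lt_trans c56 c67
    · norm_num; exact lt_trans c67 c78
    · norm_num; exact lt_trans c78 c89
    · norm_num; exact lt_trans c89 c910
    · norm_num; exact lt_trans c910 c1011
    · norm_num; exact lt_trans c1011 c1112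
    · norm_num; exact lt_trans c1112 c1213
  · push_neg at hle
    have h14 : (14:ℝ) ≤ (d2:ℝ) := by exact_mod_cast hle
    exact mono (by simp; linarith) (by simp; linarith) (by linarith)
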